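/- In the FBD-α process, for all k ≥ 1 and t ≥ 0: M_{2k}(t+1) − M_{2k}(t) = Σ_{i=1}^k C(2k, 2k−2i)·M^ν_{2k−2i}(t), where M_{2k}(t) = Σ_x x^{2k} μ_t(x) and M^ν_j(t) = Σ_x x^j ν_t(x). -/

import Mathlib

open Real

/-- The mass of `μ` on the half-line `[x, ∞)`. -/
noncomputable def tailMass (μ : ℤ → ℝ) (x : ℤ) : ℝ := ∑' y : {y : ℤ // x ≤ y}, μ y

/-- The boundary `β = sup {x : μ([x,∞)) ≥ α/2}`. -/
noncomputable def bdry (α : ℝ) (μ : ℤ → ℝ) : ℤ := sSup {x : ℤ | α / 2 ≤ tailMass μ x}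

/-- The frozen mass: the extreme `α/2` mass on each side of the origin. -/
noncomputable def frozen (α : ℝ) (μ : ℤ → ℝ) : ℤ → ℝ := fun y =>
  let b := bdry α μ
  let v : ℤ → ℝ := fun w =>
    if b < w then μ w
    else if w = b then α / 2 - ∑' z : {z : ℤ // b < z}, μ z
    else 0
  if 0 ≤ y then v y else v (-y)

/-- The free mass `ν = μ - f`. -/
noncomputable def free (α : ℝ) (μ : ℤ → ℝ) : ℤ → ℝ := fun x => μ x - frozen α μ x

/-- One step of the Frozen-Boundary Diffusion:
`μ_{t+1}(x) = (ν_t(x-1) + ν_t(x+1))/2 + f_t(x)`. -/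
noncomputable def FBDstep (α : ℝ) (μ : ℤ → ℝ) : ℤ → ℝ := fun x =>
  (free α μ (x - 1) + free α μ (x + 1)) / 2 + frozen α μ x

/-- The Frozen-Boundary Diffusion with parameter `α`, started from `μ_0 = δ_0`. -/
noncomputable def FBD (α : ℝ) : ℕ → ℤ → ℝ
  | 0 => fun x => if x = 0 then 1 else 0
  | t + 1 => FBDstep α (FBD α t)

open Finset

lemma supp_frozen (α : ℝ) (μ : ℤ → ℝ) (h : (Function.support μ).Finite) :
    (Function.support (frozen α μ)).Finite := by
  have key : ∀ y, frozen α μ y ≠ 0 →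
      y ∈ (Function.support μ ∪ {bdry α μ}) ∪
        Neg.neg '' (Function.support μ ∪ {bdry α μ}) := by
    intro y hy
    simp only [frozen] at hy
    by_cases h0 : 0 ≤ y
    · rw [if_pos h0] at hy
      split_ifs at hy with h1 h2
      · exact Or.inl (Or.inl hy)
      · exact Or.inl (Or.inr h2)
      · exact absurd rfl hy
    · rw [if_neg h0] at hy
      split_ifs at hy with h1 h2
      · exact Or.inr ⟨-y, Or.inl hy, by ring⟩
      · exact Or.inr ⟨-y, Or.inr h2, by ring⟩
      · exact absurd rfl hy
  exact Set.Finite.subset (((h.union (Set.finite_singleton _)).union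
    ((h.union (Set.finite_singleton _)).image _))) key

lemma supp_free (α : ℝ) (μ : ℤ → ℝ) (h : (Function.support μ).Finite) :
    (Function.support (free α μ)).Finite := by
  apply Set.Finite.subset (h.union (supp_frozen α μ h))
  intro x hx
  simp only [Function.mem_support, free] at hx
  by_contra hc
  simp only [Set.mem_union, Function.mem_support, not_or, not_not] at hc
  rw [hc.1, hc.2, sub_zero] at hx; exact hx rfl

lemma supp_step (α : ℝ) (μ : ℤ → ℝ) (h : (Function.support μ).Finite) :
    (Function.support (FBDstep α μ)).Finite := by
  have hν := supp_free α μ h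
  have hf := supp_frozen α μ h
  apply Set.Finite.subset (((hν.image (· + 1)).union (hν.image (· - 1))).union hf)
  intro x hx
  simp only [Function.mem_support, FBDstep] at hx
  by_cases h1 : free α μ (x - 1) = 0
  · by_cases h2 : free α μ (x + 1) = 0
    · refine Or.inr ?_
      rw [h1, h2] at hx; simpa using hx
    · exact Or.inl (Or.inr ⟨x + 1, h2, by ring⟩)
  · exact Or.inl (Or.inl ⟨x - 1, h1, by ring⟩)

lemma supp_FBD (α : ℝ) (t : ℕ) : (Function.support (FBD α t)).Finite := by
  induction t with
  | zero =>
    apply Set.Finite.subset (Set.finite_singleton (0 : ℤ))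
    intro x hx
    simp only [Function.mem_support, FBD] at hx
    by_contra hc
    simp only [Set.mem_singleton_iff] at hc
    rw [if_neg hc] at hx; exact hx rfl
  | succ t ih => exact supp_step α _ ih

lemma summ_helper {h : ℤ → ℝ} (hh : (Function.support h).Finite) (g : ℤ → ℝ) :
    Summable (fun x => g x * h x) := by
  apply summable_of_ne_finset_zero (s := hh.toFinset)
  intro b hb
  have : h b = 0 := by
    by_contra hc
    exact hb (hh.mem_toFinset.2 hc)
  rw [this, mul_zero]

lemma poly_id (n : ℕ) (x : ℝ) :
    (x + 1) ^ (2 * n) + (x - 1) ^ (2 * n) =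
      2 * ∑ i ∈ Finset.range (n + 1), ((2 * n).choose (2 * i) : ℝ) * x ^ (2 * i) := by
  have h1 := add_pow x 1 (2 * n)
  have h2 := add_pow x (-1 : ℝ) (2 * n)
  rw [sub_eq_add_neg, h2, h1, ← Finset.sum_add_distrib]
  have hterm : ∀ m, x ^ m * 1 ^ (2 * n - m) * ((2 * n).choose m : ℝ) +
      x ^ m * (-1 : ℝ) ^ (2 * n - m) * ((2 * n).choose m : ℝ) =
      x ^ m * ((2 * n).choose m : ℝ) * (1 + (-1 : ℝ) ^ (2 * n - m)) := by
    intro m; ring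
  rw [Finset.sum_congr rfl (fun m _ => hterm m)]
  have hfilter : ∑ m ∈ Finset.range (2 * n + 1),
      x ^ m * ((2 * n).choose m : ℝ) * (1 + (-1 : ℝ) ^ (2 * n - m)) =
      ∑ m ∈ (Finset.range (2 * n + 1)).filter (fun m => Even m),
      x ^ m * ((2 * n).choose m : ℝ) * (1 + (-1 : ℝ) ^ (2 * n - m)) := by
    refine (Finset.sum_filter_of_ne ?_).symm
    intro m hm hne
    by_contra hodd
    have hmle : m ≤ 2 * n := by simp at hm; omega
    have : Odd (2 * n - m) := by
      rcases Nat.odd_iff.mp (Nat.not_even_iff_odd.mp hodd) with h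
      rw [Nat.odd_iff]; omega
    rw [this.neg_one_pow] at hne
    simp at hne
  rw [hfilter]
  have himg : (Finset.range (2 * n + 1)).filter (fun m => Even m) =
      (Finset.range (n + 1)).image (fun i => 2 * i) := by
    ext m
    simp only [Finset.mem_filter, Finset.mem_range, Finset.mem_image, Nat.even_iff]
    constructor
    · rintro ⟨h1, h2⟩; exact ⟨m / 2, by omega, by omega⟩
    · rintro ⟨i, hi, rfl⟩; omega
  rw [himg, Finset.sum_image (by intro a _ b _ h; have h' : 2 * a = 2 * b := h; omega), Finset.mul_sum]
  refine Finset.sum_congr rfl fun i hi => ?_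
  simp only [Finset.mem_range] at hi
  have heven : Even (2 * n - 2 * i) := ⟨n - i, by omega⟩
  rw [heven.neg_one_pow]
  ring

lemma coeff_id (k : ℕ) (x : ℝ) :
    ((x + 1) ^ (2 * k) + (x - 1) ^ (2 * k)) / 2 - x ^ (2 * k) =
      ∑ j ∈ Finset.range k, ((2 * k).choose (2 * j) : ℝ) * x ^ (2 * j) := by
  rw [poly_id, Finset.sum_range_succ]
  have : (2 * k).choose (2 * k) = 1 := Nat.choose_self _
  rw [this]
  push_cast
  ring

/-- Moment evolution in the FBD-α process:
`M_{2k}(t+1) - M_{2k}(t) = ∑_{i=1}^k C(2k, 2k-2i) M^ν_{2k-2i}(t)`. -/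
theorem stmt16 (α : ℝ) (hα : α ∈ Set.Ioo (0:ℝ) 1) (k : ℕ) (hk : 1 ≤ k) (t : ℕ) :
    (∑' x : ℤ, (x : ℝ) ^ (2 * k) * FBD α (t + 1) x) - ∑' x : ℤ, (x : ℝ) ^ (2 * k) * FBD α t x =
      ∑ i ∈ Icc 1 k, (Nat.choose (2 * k) (2 * k - 2 * i) : ℝ) *
        ∑' x : ℤ, (x : ℝ) ^ (2 * k - 2 * i) * free α (FBD α t) x := by
  set μ := FBD α t with hμdef
  set f := frozen α μ with hfdef
  set ν := free α μ with hνdef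
  have hμ : (Function.support μ).Finite := supp_FBD α t
  have hf : (Function.support f).Finite := supp_frozen α μ hμ
  have hν : (Function.support ν).Finite := supp_free α μ hμ
  have hνm : (Function.support (fun x => ν (x - 1))).Finite := by
    have := hν.preimage (f := fun x : ℤ => x - 1) (fun a _ b _ hab => by simp only [] at hab; omega)
    refine this.subset ?_
    intro x hx; exact hx
  have hνp : (Function.support (fun x => ν (x + 1))).Finite := by
    have := hν.preimage (f := fun x : ℤ => x + 1) (fun a _ b _ hab => by simp only [] at hab; omega)
    refine this.subset ?_
    intro x hx; exact hx
  set g : ℤ → ℝ := fun x => (x : ℝ) ^ (2 * k) with hg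
  -- step equations
  have e1 : ∀ x : ℤ, FBD α (t + 1) x = (ν (x - 1) + ν (x + 1)) / 2 + f x := by
    intro x; rfl
  have e2 : ∀ x : ℤ, μ x = ν x + f x := by
    intro x; simp only [hνdef, free, hfdef]; ring
  -- summabilities
  have S1 : Summable (fun x : ℤ => g x * ν (x - 1) / 2) := by
    simpa [mul_comm, mul_div_assoc] using summ_helper hνm (fun x => g x / 2)
  have S2 : Summable (fun x : ℤ => g x * ν (x + 1) / 2) :=
    (summ_helper hνp (fun x => g x / 2)).congr (fun b => by ring)
  have S3 : Summable (fun x : ℤ => g x * f x) := summ_helper hf g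
  have Sν : Summable (fun x : ℤ => g x * ν x) := summ_helper hν g
  have Sa : Summable (fun x : ℤ => g (x + 1) * ν x / 2) :=
    (summ_helper hν (fun x => g (x + 1) / 2)).congr (fun b => by ring)
  have Sb : Summable (fun x : ℤ => g (x - 1) * ν x / 2) :=
    (summ_helper hν (fun x => g (x - 1) / 2)).congr (fun b => by ring)
  have hA : (∑' x : ℤ, g x * FBD α (t + 1) x) =
      (∑' x : ℤ, g x * ν (x - 1) / 2) + ((∑' x : ℤ, g x * ν (x + 1) / 2) +
        ∑' x : ℤ, g x * f x) := by
    have h : (∑' x : ℤ, g x * FBD α (t + 1) x) =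
        ∑' x : ℤ, (g x * ν (x - 1) / 2 + (g x * ν (x + 1) / 2 + g x * f x)) :=
      tsum_congr fun x => by rw [e1 x]; ring
    rw [h, Summable.tsum_add S1 (S2.add S3), Summable.tsum_add S2 S3]
  have hB : (∑' x : ℤ, g x * μ x) = (∑' x : ℤ, g x * ν x) + ∑' x : ℤ, g x * f x := by
    have h : (∑' x : ℤ, g x * μ x) = ∑' x : ℤ, (g x * ν x + g x * f x) :=
      tsum_congr fun x => by rw [e2 x]; ring
    rw [h, Summable.tsum_add Sν S3]
  have hT1 : (∑' x : ℤ, g x * ν (x - 1) / 2) = ∑' x : ℤ, g (x + 1) * ν x / 2 := by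
    rw [← (Equiv.addRight (1 : ℤ)).tsum_eq (fun x => g x * ν (x - 1) / 2)]
    exact tsum_congr fun x => by simp [Equiv.addRight]
  have hT2 : (∑' x : ℤ, g x * ν (x + 1) / 2) = ∑' x : ℤ, g (x - 1) * ν x / 2 := by
    rw [← (Equiv.subRight (1 : ℤ)).tsum_eq (fun x => g x * ν (x + 1) / 2)]
    exact tsum_congr fun x => by simp [Equiv.subRight]
  have key : (∑' x : ℤ, g (x + 1) * ν x / 2) + (∑' x : ℤ, g (x - 1) * ν x / 2) -
      (∑' x : ℤ, g x * ν x) =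
      ∑' x : ℤ, (g (x + 1) / 2 + g (x - 1) / 2 - g x) * ν x := by
    rw [← Summable.tsum_add Sa Sb, ← Summable.tsum_sub (Sa.add Sb) Sν]
    exact tsum_congr fun x => by ring
  have hco : ∀ x : ℤ, (g (x + 1) / 2 + g (x - 1) / 2 - g x) * ν x =
      ∑ j ∈ Finset.range k, ((2 * k).choose (2 * j) : ℝ) * ((x : ℝ) ^ (2 * j) * ν x) := by
    intro x
    have hc : g (x + 1) / 2 + g (x - 1) / 2 - g x =
        (((x : ℝ) + 1) ^ (2 * k) + ((x : ℝ) - 1) ^ (2 * k)) / 2 - (x : ℝ) ^ (2 * k) := by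
      simp only [hg]; push_cast; ring
    rw [hc, coeff_id, Finset.sum_mul]
    exact Finset.sum_congr rfl fun j _ => by ring
  have Sj : ∀ j ∈ Finset.range k, Summable (fun x : ℤ =>
      ((2 * k).choose (2 * j) : ℝ) * ((x : ℝ) ^ (2 * j) * ν x)) := by
    intro j _
    exact (summ_helper hν (fun x => ((2 * k).choose (2 * j) : ℝ) * (x : ℝ) ^ (2 * j))).congr
      (fun b => by ring)
  have main : (∑' x : ℤ, (g (x + 1) / 2 + g (x - 1) / 2 - g x) * ν x) =
      ∑ j ∈ Finset.range k, ((2 * k).choose (2 * j) : ℝ) *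
        ∑' x : ℤ, (x : ℝ) ^ (2 * j) * ν x := by
    rw [tsum_congr hco, Summable.tsum_finsetSum Sj]
    exact Finset.sum_congr rfl fun j _ => tsum_mul_left
  have hre : (∑ i ∈ Icc 1 k, ((2 * k).choose (2 * k - 2 * i) : ℝ) *
      ∑' x : ℤ, (x : ℝ) ^ (2 * k - 2 * i) * ν x) =
      ∑ j ∈ Finset.range k, ((2 * k).choose (2 * j) : ℝ) *
        ∑' x : ℤ, (x : ℝ) ^ (2 * j) * ν x := by
    refine Finset.sum_nbij' (fun i => k - i) (fun j => k - j) ?_ ?_ ?_ ?_ ?_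
    · intro a ha; simp only [Finset.mem_Icc] at ha; simp only [Finset.mem_range]; omega
    · intro a ha; simp only [Finset.mem_range] at ha; simp only [Finset.mem_Icc]; omega
    · intro a ha; simp only [Finset.mem_Icc] at ha; show k - (k - a) = a; omega
    · intro a ha; simp only [Finset.mem_range] at ha; show k - (k - a) = a; omega
    · intro a ha
      simp only [Finset.mem_Icc] at ha
      have h2 : 2 * k - 2 * a = 2 * (k - a) := by omega
      rw [h2]
  calc (∑' x : ℤ, g x * FBD α (t + 1) x) - ∑' x : ℤ, g x * μ x
      = ((∑' x : ℤ, g x * ν (x - 1) / 2) + ((∑' x : ℤ, g x * ν (x + 1) / 2) +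
        ∑' x : ℤ, g x * f x)) - ((∑' x : ℤ, g x * ν x) + ∑' x : ℤ, g x * f x) := by
        rw [hA, hB]
    _ = (∑' x : ℤ, g (x + 1) * ν x / 2) + (∑' x : ℤ, g (x - 1) * ν x / 2) -
        (∑' x : ℤ, g x * ν x) := by rw [hT1, hT2]; ring
    _ = ∑' x : ℤ, (g (x + 1) / 2 + g (x - 1) / 2 - g x) * ν x := key
    _ = ∑ j ∈ Finset.range k, ((2 * k).choose (2 * j) : ℝ) *
        ∑' x : ℤ, (x : ℝ) ^ (2 * j) * ν x := main
    _ = ∑ i ∈ Icc 1 k, ((2 * k).choose (2 * k - 2 * i) : ℝ) *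
        ∑' x : ℤ, (x : ℝ) ^ (2 * k - 2 * i) * ν x := hre.symm
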